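/- Let A be a commutative ring and E an A-module. The trivial extension (idealization) A ⋉ E is locally stable if and only if A is locally stable. -/

import Mathlib

/-- A commutative ring has stable range 1. -/
def HasStableRange1 (R : Type*) [CommRing R] : Prop :=
  ∀ a b : R, Ideal.span {a} ⊔ Ideal.span {b} = ⊤ → ∃ y : R, IsUnit (a + b * y)

/-- An element `a` is stable if `R/aR` has stable range 1. -/
def IsStableElem {R : Type*} [CommRing R] (a : R) : Prop :=
  HasStableRange1 (R ⧸ Ideal.span {a})

/-- A commutative ring is locally stable. -/
def LocallyStable (R : Type*) [CommRing R] : Prop :=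
  ∀ a b : R, Ideal.span {a} ⊔ Ideal.span {b} = ⊤ →
    ∃ y : R, HasStableRange1 (R ⧸ Ideal.span {a + b * y})

/-- A clean ring: every element is the sum of an idempotent and a unit. -/
def IsCleanRing (R : Type*) [CommRing R] : Prop :=
  ∀ a : R, ∃ e u : R, IsIdempotentElem e ∧ IsUnit u ∧ a = e + u

/-- A ring has neat range 1. -/
def NeatRange1 (R : Type*) [CommRing R] : Prop :=
  ∀ a b : R, Ideal.span {a} ⊔ Ideal.span {b} = ⊤ →
    ∃ y : R, IsCleanRing (R ⧸ Ideal.span {a + b * y})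

/-- A ring has almost stable range 1: every proper homomorphic image has stable range 1. -/
def AlmostStableRange1 (R : Type*) [CommRing R] : Prop :=
  ∀ I : Ideal R, I ≠ ⊥ → HasStableRange1 (R ⧸ I)

/-- An elementary divisor ring: every rectangular matrix admits diagonal reduction. -/
def ElementaryDivisorRing (R : Type*) [CommRing R] : Prop :=
  ∀ (m n : ℕ) (A : Matrix (Fin m) (Fin n) R),
    ∃ (P : Matrix (Fin m) (Fin m) R) (Q : Matrix (Fin n) (Fin n) R),
      IsUnit P ∧ IsUnit Q ∧
      (∀ (i : Fin m) (j : Fin n), (i : ℕ) ≠ (j : ℕ) → (P * A * Q) i j = 0) ∧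
      (∀ (i i' : Fin m) (j j' : Fin n), (i : ℕ) = (j : ℕ) → (i' : ℕ) = (j' : ℕ) →
        (i' : ℕ) = (i : ℕ) + 1 → (P * A * Q) i j ∣ (P * A * Q) i' j')

/-- A ring is strongly completable. -/
def StronglyCompletable (R : Type*) [CommRing R] : Prop :=
  ∀ (n : ℕ) (hn : 0 < n) (a : Fin n → R) (d : R),
    (⨆ i, Ideal.span {a i}) = Ideal.span {d} →
    ∃ A : Matrix (Fin n) (Fin n) R, (∀ j, A ⟨0, hn⟩ j = a j) ∧ A.det = d


private lemma comax_iff {R : Type*} [CommRing R] (a b : R) :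
    Ideal.span {a} ⊔ Ideal.span {b} = ⊤ ↔ ∃ u v : R, u * a + v * b = 1 := by
  rw [← Ideal.span_insert, Ideal.eq_top_iff_one, Ideal.mem_span_pair]

private lemma sr1_of_surjective {S T : Type*} [CommRing S] [CommRing T] (φ : S →+* T)
    (hφ : Function.Surjective φ) (h : HasStableRange1 S) : HasStableRange1 T := by
  intro a b hab
  obtain ⟨u, v, huv⟩ := (comax_iff a b).mp hab
  obtain ⟨a', ha⟩ := hφ a
  obtain ⟨b', hb⟩ := hφ b
  obtain ⟨u', hu⟩ := hφ u
  obtain ⟨v', hv⟩ := hφ v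
  set c := v' * b' + (1 - u' * a' - v' * b') with hc
  have hcm : Ideal.span {a'} ⊔ Ideal.span {c} = ⊤ :=
    (comax_iff _ _).mpr ⟨u', 1, by rw [hc]; ring⟩
  obtain ⟨y, hy⟩ := h a' c hcm
  have hφc : φ c = v * b := by
    simp only [hc, map_add, map_sub, map_mul, map_one, ha, hb, hu, hv]
    linear_combination -huv
  refine ⟨v * φ y, ?_⟩
  have := hy.map φ
  rwa [map_add, map_mul, ha, hφc, show v * b * φ y = b * (v * φ y) by ring] at this

private lemma sr1_of_ker_sq {S T : Type*} [CommRing S] [CommRing T] (φ : S →+* T)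
    (hφ : Function.Surjective φ) (hk : ∀ s : S, φ s = 0 → s * s = 0)
    (h : HasStableRange1 T) : HasStableRange1 S := by
  intro a b hab
  obtain ⟨u, v, huv⟩ := (comax_iff a b).mp hab
  have hT : Ideal.span {φ a} ⊔ Ideal.span {φ b} = ⊤ :=
    (comax_iff _ _).mpr ⟨φ u, φ v, by rw [← map_mul, ← map_mul, ← map_add, huv, map_one]⟩
  obtain ⟨ybar, hy⟩ := h (φ a) (φ b) hT
  obtain ⟨y, rfl⟩ := hφ ybar
  refine ⟨y, ?_⟩
  have hu2 : IsUnit (φ (a + b * y)) := by rwa [map_add, map_mul]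
  obtain ⟨w, hw⟩ := hu2.exists_right_inv
  obtain ⟨w', rfl⟩ := hφ w
  have hk2 : ((a + b * y) * w' - 1) * ((a + b * y) * w' - 1) = 0 := by
    apply hk
    rw [map_sub, map_mul, map_one, hw, sub_self]
  have hunit : IsUnit ((a + b * y) * w') := by
    refine IsUnit.of_mul_eq_one (1 - ((a + b * y) * w' - 1)) ?_
    linear_combination -hk2
  exact isUnit_of_mul_isUnit_left hunit

open TrivSqZeroExt in
private lemma key_surj {A : Type*} {E : Type*} [CommRing A] [AddCommGroup E] [Module A E]
    [Module Aᵐᵒᵖ E] [IsCentralScalar A E] (r : TrivSqZeroExt A E) :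
    ∃ φ : (TrivSqZeroExt A E ⧸ Ideal.span {r}) →+* A ⧸ Ideal.span {fst r},
      Function.Surjective φ ∧ (∀ s, φ s = 0 → s * s = 0) := by
  let π : TrivSqZeroExt A E →+* A ⧸ Ideal.span {fst r} :=
    (Ideal.Quotient.mk _).comp (fstHom A A E).toRingHom
  have hπ : ∀ s : TrivSqZeroExt A E, π s = Ideal.Quotient.mk _ (fst s) := fun s => rfl
  have hπr : ∀ x ∈ Ideal.span {r}, π x = 0 := by
    intro x hx
    obtain ⟨c, rfl⟩ := Ideal.mem_span_singleton'.mp hx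
    rw [hπ, fst_mul, Ideal.Quotient.eq_zero_iff_mem]
    exact Ideal.mul_mem_left _ _ (Ideal.mem_span_singleton_self _)
  refine ⟨Ideal.Quotient.lift _ π hπr, ?_, ?_⟩
  · intro t
    obtain ⟨x, rfl⟩ := Ideal.Quotient.mk_surjective t
    exact ⟨Ideal.Quotient.mk _ (inl x), by simp [hπ]⟩
  · intro sbar hs
    obtain ⟨s, rfl⟩ := Ideal.Quotient.mk_surjective sbar
    rw [Ideal.Quotient.lift_mk, hπ, Ideal.Quotient.eq_zero_iff_mem,
      Ideal.mem_span_singleton'] at hs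
    obtain ⟨c, hc⟩ := hs
    have hmk : Ideal.Quotient.mk (Ideal.span {r}) s
        = Ideal.Quotient.mk _ (s - inl c * r) := by
      rw [Ideal.Quotient.mk_eq_mk_iff_sub_mem]
      have : s - (s - inl c * r) = inl c * r := by ring
      rw [this]
      exact Ideal.mul_mem_left _ _ (Ideal.mem_span_singleton_self _)
    have hfst0 : fst (s - inl c * r) = 0 := by
      rw [fst_sub, fst_mul, fst_inl]
      linear_combination -hc
    have hsq : (s - inl c * r) * (s - inl c * r) = 0 := by
      have hrepr : s - inl c * r = inr (snd (s - inl c * r)) := by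
        conv_lhs => rw [← inl_fst_add_inr_snd_eq (s - inl c * r)]
        rw [hfst0, inl_zero, zero_add]
      rw [hrepr, inr_mul_inr]
    rw [hmk, ← map_mul, hsq, map_zero]

theorem stmt13 (A : Type*) (E : Type*) [CommRing A] [AddCommGroup E] [Module A E] [Module Aᵐᵒᵖ E] [IsCentralScalar A E] :
    LocallyStable (TrivSqZeroExt A E) ↔ LocallyStable A := by
  constructor
  · intro h a b hab
    obtain ⟨u, v, huv⟩ := (comax_iff a b).mp hab
    have hR : Ideal.span {(TrivSqZeroExt.inl a : TrivSqZeroExt A E)} ⊔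
        Ideal.span {(TrivSqZeroExt.inl b : TrivSqZeroExt A E)} = ⊤ :=
      (comax_iff _ _).mpr ⟨TrivSqZeroExt.inl u, TrivSqZeroExt.inl v, by
        rw [← TrivSqZeroExt.inl_mul, ← TrivSqZeroExt.inl_mul, ← TrivSqZeroExt.inl_add, huv,
          TrivSqZeroExt.inl_one]⟩
    obtain ⟨z, hz⟩ := h _ _ hR
    refine ⟨TrivSqZeroExt.fst z, ?_⟩
    obtain ⟨φ, hsurj, -⟩ := key_surj (TrivSqZeroExt.inl a + TrivSqZeroExt.inl b * z)
    have hfr : TrivSqZeroExt.fst (TrivSqZeroExt.inl a + TrivSqZeroExt.inl b * z)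
        = a + b * TrivSqZeroExt.fst z := by
      rw [TrivSqZeroExt.fst_add, TrivSqZeroExt.fst_mul, TrivSqZeroExt.fst_inl,
        TrivSqZeroExt.fst_inl]
    rw [← hfr]
    exact sr1_of_surjective φ hsurj hz
  · intro h x y hxy
    obtain ⟨u, v, huv⟩ := (comax_iff x y).mp hxy
    have hA : Ideal.span {TrivSqZeroExt.fst x} ⊔ Ideal.span {TrivSqZeroExt.fst y} = ⊤ :=
      (comax_iff _ _).mpr ⟨TrivSqZeroExt.fst u, TrivSqZeroExt.fst v, by
        rw [← TrivSqZeroExt.fst_mul, ← TrivSqZeroExt.fst_mul, ← TrivSqZeroExt.fst_add, huv,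
          TrivSqZeroExt.fst_one]⟩
    obtain ⟨t, ht⟩ := h _ _ hA
    refine ⟨TrivSqZeroExt.inl t, ?_⟩
    obtain ⟨φ, hsurj, hk⟩ := key_surj (x + y * TrivSqZeroExt.inl t)
    have hfr : TrivSqZeroExt.fst (x + y * TrivSqZeroExt.inl t)
        = TrivSqZeroExt.fst x + TrivSqZeroExt.fst y * t := by
      rw [TrivSqZeroExt.fst_add, TrivSqZeroExt.fst_mul, TrivSqZeroExt.fst_inl]
    rw [← hfr] at ht
    exact sr1_of_ker_sq φ hsurj hk ht
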